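/- arXiv:2211.10276 — 2 statements merged into one kernel-verified Lean document; each statement's English description precedes it below -/
import Mathlib

section
/- Let F_2 = ⟨a,b⟩, H = ⟨b, ababa⟩ ≤ F_2, and g = a. Then for every nonzero integer i, the commutator [(h_2 h_1)^i, x h_1], where h_1 = b and h_2 = ababa, lies in the ideal I_g and has degree 2; these elements are pairwise non-conjugate in H * ⟨x⟩ for distinct i. Consequently ρ_{g,2}(M) grows at least linearly in M. -/
/-- Number of occurrences of `x^{±1}` in a word over the basis `h₁,…,h_r,x` of `H * ⟨x⟩`. -/
def xcount {r : ℕ} (w : List ((Fin r ⊕ Unit) × Bool)) : ℕ :=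
  w.countP fun l => match l.1 with | Sum.inr _ => true | Sum.inl _ => false

/-- A word is cyclically reduced iff its double is a reduced word. -/
def CyclicallyReduced {r : ℕ} (w : List ((Fin r ⊕ Unit) × Bool)) : Prop :=
  FreeGroup.reduce (w ++ w) = w ++ w

/-- `rhoD φ d M` counts the cyclically reduced words of length at most `M` lying in
`I_g = ker φ` with degree `d`. -/
noncomputable def rhoD {n r : ℕ} (φ : FreeGroup (Fin r ⊕ Unit) →* FreeGroup (Fin n))
    (d M : ℕ) : ℕ :=
  Set.ncard { w : List ((Fin r ⊕ Unit) × Bool) |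
    w.length ≤ M ∧ CyclicallyReduced w ∧ xcount w = d ∧ FreeGroup.mk w ∈ MonoidHom.ker φ }

/-- The degree of an element of `H * ⟨x⟩`: the number of occurrences of `x^{±1}` in its
cyclic reduction, i.e. the minimum over all conjugates of the number of occurrences of
`x^{±1}` in the reduced word. -/
noncomputable def xdeg {r : ℕ} (w : FreeGroup (Fin r ⊕ Unit)) : ℕ :=
  sInf { c | ∃ u : FreeGroup (Fin r ⊕ Unit), c = xcount (FreeGroup.toWord (u * w * u⁻¹)) }

/-- `a` and `b`: the generators of `F₂` (modelled as `FreeGroup (Fin 2)`). -/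
noncomputable def aGen : FreeGroup (Fin 2) := FreeGroup.of 0
noncomputable def bGen : FreeGroup (Fin 2) := FreeGroup.of 1

/-- The evaluation map `H * ⟨x⟩ → F₂` for `H = ⟨b, ababa⟩` and `g = a`:
`h₁ ↦ b`, `h₂ ↦ ababa`, `x ↦ a`. -/
noncomputable def phi16 : FreeGroup (Fin 2 ⊕ Unit) →* FreeGroup (Fin 2) :=
  FreeGroup.lift (Sum.elim
    (fun i : Fin 2 => if i = 0 then bGen else aGen * bGen * aGen * bGen * aGen)
    (fun _ => aGen))

open scoped commutatorElement in
/-- The degree-two equations `[(h₂h₁)^i, x h₁]`. -/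
noncomputable def eqn16 (i : ℤ) : FreeGroup (Fin 2 ⊕ Unit) :=
  ⁅((FreeGroup.of (Sum.inl 1) : FreeGroup (Fin 2 ⊕ Unit)) * FreeGroup.of (Sum.inl 0)) ^ i,
    (FreeGroup.of (Sum.inr ()) : FreeGroup (Fin 2 ⊕ Unit)) * FreeGroup.of (Sum.inl 0)⁆

namespace Aux16

abbrev α2 := Sum (Fin 2) Unit
abbrev Ltr := α2 × Bool

def isX (l : Ltr) : Bool := match l.1 with | Sum.inr _ => true | Sum.inl _ => false

lemma isX_def :
    (fun l : Ltr => match l.1 with | Sum.inr _ => true | Sum.inl _ => false) = isX := by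
  funext l
  obtain ⟨a, b⟩ := l
  cases a <;> rfl

lemma xcount_eq (L : List Ltr) : xcount L = L.countP isX := by
  unfold xcount
  induction L with
  | nil => rfl
  | cons p L ih =>
      rw [List.countP_cons, List.countP_cons, ih]
      obtain ⟨a, b⟩ := p
      cases a <;> rfl

/-! ### The integral Heisenberg group -/

@[ext] structure Heis where
  a : ℤ
  b : ℤ
  c : ℤ

instance : Mul Heis := ⟨fun p q => ⟨p.a + q.a, p.b + q.b, p.c + q.c + p.a * q.b⟩⟩
instance : One Heis := ⟨⟨0, 0, 0⟩⟩
instance : Inv Heis := ⟨fun p => ⟨-p.a, -p.b, p.a * p.b - p.c⟩⟩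

@[simp] lemma mul_a (p q : Heis) : (p * q).a = p.a + q.a := rfl
@[simp] lemma mul_b (p q : Heis) : (p * q).b = p.b + q.b := rfl
@[simp] lemma mul_c (p q : Heis) : (p * q).c = p.c + q.c + p.a * q.b := rfl
@[simp] lemma one_a : (1 : Heis).a = 0 := rfl
@[simp] lemma one_b : (1 : Heis).b = 0 := rfl
@[simp] lemma one_c : (1 : Heis).c = 0 := rfl
@[simp] lemma inv_a (p : Heis) : (p⁻¹).a = -p.a := rfl
@[simp] lemma inv_b (p : Heis) : (p⁻¹).b = -p.b := rfl
@[simp] lemma inv_c (p : Heis) : (p⁻¹).c = p.a * p.b - p.c := rfl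

instance : Group Heis where
  mul := (· * ·)
  one := 1
  inv := (·⁻¹)
  mul_assoc p q r := by ext <;> simp <;> ring
  one_mul p := by ext <;> simp
  mul_one p := by ext <;> simp
  inv_mul_cancel p := by ext <;> simp <;> ring

lemma g0_pow (k : ℕ) : (⟨1, 0, 0⟩ : Heis) ^ k = ⟨k, 0, 0⟩ := by
  induction k with
  | zero => rfl
  | succ n ih => rw [pow_succ, ih]; ext <;> simp <;> push_cast <;> ring

lemma g0_zpow (i : ℤ) : (⟨1, 0, 0⟩ : Heis) ^ i = ⟨i, 0, 0⟩ := by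
  cases i with
  | ofNat n => rw [Int.ofNat_eq_coe, zpow_natCast, g0_pow]
  | negSucc n =>
      rw [zpow_negSucc, g0_pow]
      ext <;> simp [Int.negSucc_eq] <;> push_cast <;> ring

lemma central (u : Heis) (z : ℤ) : u * ⟨0, 0, z⟩ * u⁻¹ = ⟨0, 0, z⟩ := by
  ext <;> simp <;> ring

/-! ### Homomorphisms out of `H * ⟨x⟩` -/

noncomputable def θ : FreeGroup α2 →* Heis :=
  FreeGroup.lift (Sum.elim (fun i : Fin 2 => if i = 0 then 1 else ⟨1, 0, 0⟩)
    (fun _ => ⟨0, 1, 0⟩))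

noncomputable def σ : FreeGroup α2 →* Multiplicative ℤ :=
  FreeGroup.lift (Sum.elim (fun _ => 1) (fun _ => Multiplicative.ofAdd 1))

lemma theta_eqn (i : ℤ) : θ (eqn16 i) = ⟨0, 0, i⟩ := by
  rw [eqn16, map_commutatorElement, map_zpow, map_mul, map_mul]
  simp only [θ, FreeGroup.lift_apply_of, Sum.elim_inl, Sum.elim_inr]
  norm_num
  rw [g0_zpow, commutatorElement_def]
  ext <;> simp <;> ring

lemma sigma_eqn (i : ℤ) : σ (eqn16 i) = 1 := by
  rw [eqn16, map_commutatorElement]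
  exact commutatorElement_eq_one_iff_commute.mpr (Commute.all _ _)

lemma parity (L : List Ltr) :
    ∃ k : ℤ, (L.countP isX : ℤ) = Multiplicative.toAdd (σ (FreeGroup.mk L)) + 2 * k := by
  induction L with
  | nil =>
      refine ⟨0, ?_⟩
      simp [σ, FreeGroup.lift_mk]
  | cons p L ih =>
      obtain ⟨k, hk⟩ := ih
      rw [σ, FreeGroup.lift_mk] at hk ⊢
      rw [List.map_cons, List.prod_cons, toAdd_mul, List.countP_cons]
      obtain ⟨l, b⟩ := p
      cases l with
      | inl t =>
          refine ⟨k, ?_⟩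
          have h1 : isX (Sum.inl t, b) = false := rfl
          cases b <;> simp [h1, hk]
      | inr u =>
          have h1 : isX (Sum.inr u, b) = true := rfl
          cases b with
          | false =>
              refine ⟨k + 1, ?_⟩
              simp only [h1] at *
              push_cast
              simp [hk]
              ring
          | true =>
              refine ⟨k, ?_⟩
              simp only [h1] at *
              push_cast
              simp [hk]
              ring

lemma theta_noX (L : List Ltr) (h : ∀ p ∈ L, isX p = false) :
    (θ (FreeGroup.mk L)).b = 0 ∧ (θ (FreeGroup.mk L)).c = 0 := by
  induction L with
  | nil => constructor <;> simp [θ, FreeGroup.lift_mk]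
  | cons p L ih =>
      have hmk : FreeGroup.mk (p :: L) = FreeGroup.mk [p] * FreeGroup.mk L := by
        rw [FreeGroup.mul_mk]; rfl
      obtain ⟨hb, hc⟩ := ih (fun q hq => h q (List.mem_cons_of_mem _ hq))
      have hp := h p (List.mem_cons_self)
      obtain ⟨l, b⟩ := p
      cases l with
      | inr u => simp [isX] at hp
      | inl t =>
          have hsing : (θ (FreeGroup.mk [(Sum.inl t, b)])).b = 0 ∧
              (θ (FreeGroup.mk [(Sum.inl t, b)])).c = 0 := by
            by_cases ht : t = 0 <;> cases b <;>
              simp [θ, FreeGroup.lift_mk, ht]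
          rw [hmk, map_mul]
          constructor <;> simp [hsing.1, hsing.2, hb, hc]

/-! ### The count `X` of x-letters in the reduced word -/

noncomputable def X (g : FreeGroup α2) : ℕ := xcount g.toWord

lemma X_def (g : FreeGroup α2) : X g = g.toWord.countP isX := xcount_eq _

lemma countP_le_of_red {L₁ L₂ : List Ltr} (h : FreeGroup.Red L₁ L₂) :
    L₂.countP isX ≤ L₁.countP isX := by
  induction h with
  | refl => exact le_rfl
  | tail _ step ih =>
      refine le_trans ?_ ih
      cases step with
      | not => simp [List.countP_append, List.countP_cons]; omega

lemma X_mk_le (L : List Ltr) : X (FreeGroup.mk L) ≤ xcount L := by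
  rw [X, FreeGroup.toWord_mk, xcount_eq, xcount_eq]
  exact countP_le_of_red FreeGroup.reduce.red

lemma X_mul_le (g h : FreeGroup α2) : X (g * h) ≤ X g + X h := by
  have e : g * h = FreeGroup.mk (g.toWord ++ h.toWord) := by
    rw [← FreeGroup.mul_mk, FreeGroup.mk_toWord, FreeGroup.mk_toWord]
  rw [e]
  refine le_trans (X_mk_le _) (le_of_eq ?_)
  rw [xcount_eq, List.countP_append, X_def, X_def]

lemma X_map_inl (v : FreeGroup (Fin 2)) : X (FreeGroup.map (Sum.inl : Fin 2 → α2) v) = 0 := by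
  have e : FreeGroup.map (Sum.inl : Fin 2 → α2) v
      = FreeGroup.mk ((v.toWord).map fun x => (Sum.inl x.1, x.2)) := by
    conv_lhs => rw [← FreeGroup.mk_toWord (x := v)]
    exact FreeGroup.map.mk
  have h0 : xcount ((v.toWord).map fun x => (Sum.inl x.1, x.2)) = 0 := by
    rw [xcount_eq, List.countP_eq_zero]
    rintro ⟨l, b⟩ hl
    simp only [List.mem_map] at hl
    obtain ⟨q, -, hq⟩ := hl
    cases hq
    simp [isX]
  have := X_mk_le ((v.toWord).map fun x => (Sum.inl x.1, x.2))
  rw [h0] at this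
  rw [e]
  omega

lemma X_of (l : α2) : X (FreeGroup.of l) = xcount [(l, true)] := by
  rw [X, FreeGroup.toWord_of]

lemma X_of_inv (l : α2) : X (FreeGroup.of l)⁻¹ = xcount [(l, false)] := by
  rw [X, FreeGroup.toWord_inv, FreeGroup.toWord_of]
  simp [FreeGroup.invRev, xcount_eq]

lemma X_eqn_le (i : ℤ) : X (eqn16 i) ≤ 2 := by
  rw [eqn16, commutatorElement_def]
  set x := FreeGroup.of (Sum.inr () : α2) with hx
  set h1 := FreeGroup.of (Sum.inl 0 : α2) with hh1
  set h2 := FreeGroup.of (Sum.inl 1 : α2) with hh2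
  have hA : ∀ j : ℤ, X ((h2 * h1) ^ j) = 0 := by
    intro j
    have e : (h2 * h1) ^ j
        = FreeGroup.map (Sum.inl : Fin 2 → α2) (((FreeGroup.of 1 : FreeGroup (Fin 2)) * FreeGroup.of 0) ^ j) := by
      rw [map_zpow, map_mul, FreeGroup.map.of, FreeGroup.map.of]
    rw [e, X_map_inl]
  have hxc : X x ≤ 1 := by rw [hx, X_of]; decide
  have hh1c : X h1 ≤ 0 := by rw [hh1, X_of]; decide
  have hxinv : X x⁻¹ ≤ 1 := by rw [hx, X_of_inv]; decide
  have hh1inv : X h1⁻¹ ≤ 0 := by rw [hh1, X_of_inv]; decide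
  have step1 : X ((h2 * h1) ^ i * (x * h1) * ((h2 * h1) ^ i)⁻¹ * (x * h1)⁻¹)
      ≤ X ((h2 * h1) ^ i * (x * h1) * ((h2 * h1) ^ i)⁻¹) + X ((x * h1)⁻¹) := X_mul_le _ _
  have step2 : X ((h2 * h1) ^ i * (x * h1) * ((h2 * h1) ^ i)⁻¹)
      ≤ X ((h2 * h1) ^ i * (x * h1)) + X (((h2 * h1) ^ i)⁻¹) := X_mul_le _ _
  have step3 : X ((h2 * h1) ^ i * (x * h1)) ≤ X ((h2 * h1) ^ i) + X (x * h1) := X_mul_le _ _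
  have step4 : X (x * h1) ≤ X x + X h1 := X_mul_le _ _
  have step5 : X ((x * h1)⁻¹) ≤ X h1⁻¹ + X x⁻¹ := by
    rw [mul_inv_rev]; exact X_mul_le _ _
  have hAi := hA i
  have hAin : X (((h2 * h1) ^ i)⁻¹) = 0 := by
    rw [← zpow_neg]; exact hA (-i)
  omega

/-! ### The lower bound for conjugates -/

lemma X_conj_ge (i : ℤ) (hi : i ≠ 0) (u : FreeGroup α2) : 2 ≤ X (u * eqn16 i * u⁻¹) := by
  set g := u * eqn16 i * u⁻¹ with hg
  have hσ : σ g = 1 := by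
    rw [hg, map_mul, map_mul, map_inv, sigma_eqn, mul_one, mul_inv_cancel]
  have hθ : θ g = ⟨0, 0, i⟩ := by
    rw [hg, map_mul, map_mul, map_inv, theta_eqn, central]
  obtain ⟨k, hk⟩ := parity g.toWord
  rw [FreeGroup.mk_toWord, hσ] at hk
  simp only [toAdd_one, zero_add] at hk
  have hnz : g.toWord.countP isX ≠ 0 := by
    intro h0
    have hall : ∀ p ∈ g.toWord, isX p = false := by
      intro p hp
      have := List.countP_eq_zero.mp h0 p hp
      simpa using this
    have h2 := theta_noX g.toWord hall
    rw [FreeGroup.mk_toWord, hθ] at h2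
    exact hi h2.2
  have hX : X g = g.toWord.countP isX := X_def g
  omega

lemma ker_eqn (i : ℤ) : eqn16 i ∈ MonoidHom.ker phi16 := by
  rw [MonoidHom.mem_ker, eqn16, map_commutatorElement,
    commutatorElement_eq_one_iff_commute]
  have e1 : phi16 (FreeGroup.of (Sum.inl 1) * FreeGroup.of (Sum.inl 0)) = (aGen * bGen) ^ 3 := by
    rw [map_mul]
    simp only [phi16, FreeGroup.lift_apply_of, Sum.elim_inl]
    norm_num
    simp [pow_succ, pow_zero, one_mul, mul_assoc]
  have e2 : phi16 (FreeGroup.of (Sum.inr ()) * FreeGroup.of (Sum.inl 0)) = aGen * bGen := by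
    rw [map_mul]
    simp only [phi16, FreeGroup.lift_apply_of, Sum.elim_inl, Sum.elim_inr]
    norm_num
  rw [map_zpow, e1, e2]
  exact ((Commute.refl (aGen * bGen)).pow_left 3).zpow_left i

lemma xdeg_eqn (i : ℤ) (hi : i ≠ 0) : xdeg (eqn16 i) = 2 := by
  have hX2 : X (eqn16 i) = 2 := by
    have := X_conj_ge i hi 1
    rw [inv_one, mul_one, one_mul] at this
    exact le_antisymm (X_eqn_le i) this
  have hmem : 2 ∈ {c | ∃ u : FreeGroup α2, c = xcount (FreeGroup.toWord (u * eqn16 i * u⁻¹))} := by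
    refine ⟨1, ?_⟩
    rw [inv_one, mul_one, one_mul]
    exact hX2.symm
  refine le_antisymm (Nat.sInf_le hmem) ?_
  refine le_csInf ⟨2, hmem⟩ ?_
  rintro c ⟨u, rfl⟩
  exact X_conj_ge i hi u

/-! ### Explicit cyclically reduced words -/

def h2p : Ltr := (Sum.inl 1, true)
def h1p : Ltr := (Sum.inl 0, true)
def h2m : Ltr := (Sum.inl 1, false)
def h1m : Ltr := (Sum.inl 0, false)
def xp : Ltr := (Sum.inr (), true)
def xm : Ltr := (Sum.inr (), false)

def blk : ℕ → List Ltr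
  | 0 => []
  | n + 1 => h2p :: h1p :: blk n

def blkInv : ℕ → List Ltr
  | 0 => []
  | n + 1 => h2m :: h1m :: blkInv n

def W (n : ℕ) : List Ltr := blk (n + 1) ++ xp :: blkInv (n + 1) ++ [xm]

lemma blk_len (n : ℕ) : (blk n).length = 2 * n := by
  induction n with
  | zero => rfl
  | succ n ih => simp [blk, ih]; ring

lemma blkInv_len (n : ℕ) : (blkInv n).length = 2 * n := by
  induction n with
  | zero => rfl
  | succ n ih => simp [blkInv, ih]; ring

lemma W_len (n : ℕ) : (W n).length = 4 * n + 6 := by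
  simp [W, blk_len, blkInv_len]; ring

lemma blk_x (n : ℕ) : (blk n).countP isX = 0 := by
  induction n with
  | zero => rfl
  | succ n ih => simp [blk, List.countP_cons, ih]; decide

lemma blkInv_x (n : ℕ) : (blkInv n).countP isX = 0 := by
  induction n with
  | zero => rfl
  | succ n ih => simp [blkInv, List.countP_cons, ih]; decide

lemma W_x (n : ℕ) : xcount (W n) = 2 := by
  rw [xcount_eq]
  simp [W, List.countP_append, List.countP_cons, blk_x, blkInv_x]
  decide

lemma mk_blk (n : ℕ) : FreeGroup.mk (blk n)
    = ((FreeGroup.of (Sum.inl 1) : FreeGroup α2) * FreeGroup.of (Sum.inl 0)) ^ n := by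
  induction n with
  | zero => rw [pow_zero]; rfl
  | succ n ih =>
      have e : blk (n + 1) = ([h2p] ++ [h1p]) ++ blk n := rfl
      rw [e, ← FreeGroup.mul_mk, ← FreeGroup.mul_mk, ih, pow_succ']
      rfl

lemma mk_blkInv (n : ℕ) : FreeGroup.mk (blkInv n)
    = ((FreeGroup.of (Sum.inl 1) : FreeGroup α2)⁻¹ * (FreeGroup.of (Sum.inl 0))⁻¹) ^ n := by
  have e2 : FreeGroup.mk [h2m] = (FreeGroup.of (Sum.inl 1) : FreeGroup α2)⁻¹ := by
    rw [show (FreeGroup.of (Sum.inl 1) : FreeGroup α2) = FreeGroup.mk [(Sum.inl 1, true)] from rfl,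
      FreeGroup.inv_mk]
    rfl
  have e1 : FreeGroup.mk [h1m] = (FreeGroup.of (Sum.inl 0) : FreeGroup α2)⁻¹ := by
    rw [show (FreeGroup.of (Sum.inl 0) : FreeGroup α2) = FreeGroup.mk [(Sum.inl 0, true)] from rfl,
      FreeGroup.inv_mk]
    rfl
  induction n with
  | zero => rw [pow_zero]; rfl
  | succ n ih =>
      have e : blkInv (n + 1) = ([h2m] ++ [h1m]) ++ blkInv n := rfl
      rw [e, ← FreeGroup.mul_mk, ← FreeGroup.mul_mk, ih, pow_succ', e2, e1]

open scoped commutatorElement in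
lemma comm_key {G : Type*} [Group G] (b1 b2 xx : G) (m : ℕ) :
    ⁅(b2 * b1) ^ m, xx * b1⁆ = (b2 * b1) ^ m * (xx * ((b2⁻¹ * b1⁻¹) ^ m * xx⁻¹)) := by
  have h1 : (b2⁻¹ * b1⁻¹) ^ m = b1 * ((b2 * b1)⁻¹) ^ m * b1⁻¹ := by
    rw [← conj_pow]
    congr 1
    group
  rw [h1, commutatorElement_def, mul_inv_rev, ← inv_pow]
  group

lemma mk_W (n : ℕ) : FreeGroup.mk (W n) = eqn16 ((n + 1 : ℕ) : ℤ) := by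
  have hW : W n = blk (n + 1) ++ ([xp] ++ (blkInv (n + 1) ++ [xm])) := by
    simp [W]
  have exp : FreeGroup.mk [xp] = (FreeGroup.of (Sum.inr ()) : FreeGroup α2) := rfl
  have exm : FreeGroup.mk [xm] = (FreeGroup.of (Sum.inr ()) : FreeGroup α2)⁻¹ := by
    rw [show (FreeGroup.of (Sum.inr ()) : FreeGroup α2) = FreeGroup.mk [(Sum.inr (), true)] from
      rfl, FreeGroup.inv_mk]
    rfl
  rw [hW, ← FreeGroup.mul_mk, ← FreeGroup.mul_mk, ← FreeGroup.mul_mk,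
    mk_blk, mk_blkInv, exp, exm, eqn16, zpow_natCast, comm_key]

/-! ### Cyclic reducedness -/

def nc (p q : Ltr) : Prop := ¬(p.1 = q.1 ∧ p.2 = !q.2)

instance : DecidableRel nc := fun p q => by unfold nc; infer_instance

lemma reduce_chain {L : List Ltr} (h : List.IsChain nc L) : FreeGroup.reduce L = L := by
  induction L with
  | nil => rfl
  | cons p L ih =>
      have hL := ih h.tail
      rw [FreeGroup.reduce.cons, hL]
      cases L with
      | nil => rfl
      | cons q t =>
          have hpq : nc p q := (List.isChain_cons_cons.mp h).1
          exact if_neg hpq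

lemma chain_blk (n : ℕ) (l : List Ltr) (hl : List.IsChain nc l)
    (hh : l.head? = some xp ∨ l = []) : List.IsChain nc (blk n ++ l) := by
  induction n with
  | zero => simpa [blk]
  | succ n ih =>
      show List.IsChain nc (h2p :: h1p :: (blk n ++ l))
      rw [List.isChain_cons_cons]
      refine ⟨by decide, ?_⟩
      rw [List.isChain_cons]
      refine ⟨?_, ih⟩
      intro y hy
      cases n with
      | zero =>
          simp only [blk, List.nil_append] at hy
          rcases hh with hh | hh
          · rw [hh] at hy
            simp only [Option.mem_def, Option.some.injEq] at hy
            subst hy; decide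
          · subst hh; simp at hy
      | succ m =>
          have : (blk (m + 1) ++ l).head? = some h2p := rfl
          rw [this] at hy
          simp only [Option.mem_def, Option.some.injEq] at hy
          subst hy; decide

lemma chain_blkInv (n : ℕ) (l : List Ltr) (hl : List.IsChain nc l)
    (hh : l.head? = some xm ∨ l = []) : List.IsChain nc (blkInv n ++ l) := by
  induction n with
  | zero => simpa [blkInv]
  | succ n ih =>
      show List.IsChain nc (h2m :: h1m :: (blkInv n ++ l))
      rw [List.isChain_cons_cons]
      refine ⟨by decide, ?_⟩
      rw [List.isChain_cons]
      refine ⟨?_, ih⟩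
      intro y hy
      cases n with
      | zero =>
          simp only [blkInv, List.nil_append] at hy
          rcases hh with hh | hh
          · rw [hh] at hy
            simp only [Option.mem_def, Option.some.injEq] at hy
            subst hy; decide
          · subst hh; simp at hy
      | succ m =>
          have : (blkInv (m + 1) ++ l).head? = some h2m := rfl
          rw [this] at hy
          simp only [Option.mem_def, Option.some.injEq] at hy
          subst hy; decide

lemma cyc_W (n : ℕ) : CyclicallyReduced (W n) := by
  have hdouble : W n ++ W n
      = blk (n + 1) ++ (xp :: (blkInv (n + 1) ++ (xm :: (blk (n + 1)
          ++ (xp :: (blkInv (n + 1) ++ [xm])))))) := by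
    simp [W]
  have c0 : List.IsChain nc [xm] := List.isChain_singleton _
  have c1 : List.IsChain nc (blkInv (n + 1) ++ [xm]) :=
    chain_blkInv _ _ c0 (Or.inl rfl)
  have h1 : (blkInv (n + 1) ++ [xm]).head? = some h2m := rfl
  have c2 : List.IsChain nc (xp :: (blkInv (n + 1) ++ [xm])) := by
    rw [List.isChain_cons]
    refine ⟨?_, c1⟩
    intro y hy
    rw [h1] at hy
    simp only [Option.mem_def, Option.some.injEq] at hy
    subst hy; decide
  have c3 : List.IsChain nc (blk (n + 1) ++ (xp :: (blkInv (n + 1) ++ [xm]))) :=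
    chain_blk _ _ c2 (Or.inl rfl)
  have h3 : (blk (n + 1) ++ (xp :: (blkInv (n + 1) ++ [xm]))).head? = some h2p := rfl
  have c4 : List.IsChain nc (xm :: (blk (n + 1) ++ (xp :: (blkInv (n + 1) ++ [xm])))) := by
    rw [List.isChain_cons]
    refine ⟨?_, c3⟩
    intro y hy
    rw [h3] at hy
    simp only [Option.mem_def, Option.some.injEq] at hy
    subst hy; decide
  have c5 : List.IsChain nc (blkInv (n + 1)
      ++ (xm :: (blk (n + 1) ++ (xp :: (blkInv (n + 1) ++ [xm]))))) :=
    chain_blkInv _ _ c4 (Or.inl rfl)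
  have h5 : (blkInv (n + 1)
      ++ (xm :: (blk (n + 1) ++ (xp :: (blkInv (n + 1) ++ [xm]))))).head? = some h2m := rfl
  have c6 : List.IsChain nc (xp :: (blkInv (n + 1)
      ++ (xm :: (blk (n + 1) ++ (xp :: (blkInv (n + 1) ++ [xm])))))) := by
    rw [List.isChain_cons]
    refine ⟨?_, c5⟩
    intro y hy
    rw [h5] at hy
    simp only [Option.mem_def, Option.some.injEq] at hy
    subst hy; decide
  have c7 : List.IsChain nc (blk (n + 1) ++ (xp :: (blkInv (n + 1)
      ++ (xm :: (blk (n + 1) ++ (xp :: (blkInv (n + 1) ++ [xm]))))))) :=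
    chain_blk _ _ c6 (Or.inl rfl)
  rw [CyclicallyReduced, hdouble]
  exact reduce_chain c7

/-! ### Counting -/

lemma rho_ge (M : ℕ) : M / 8 ≤ rhoD phi16 2 M := by
  classical
  have hfin : {w : List Ltr | w.length ≤ M ∧ CyclicallyReduced w ∧ xcount w = 2 ∧
      FreeGroup.mk w ∈ MonoidHom.ker phi16}.Finite :=
    Set.Finite.subset (List.finite_length_le Ltr M) (fun w hw => hw.1)
  have hinj : Function.Injective W := by
    intro m n h
    have := congrArg List.length h
    rw [W_len, W_len] at this
    omega
  have hsub : ↑((Finset.range (M / 8)).image W) ⊆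
      {w : List Ltr | w.length ≤ M ∧ CyclicallyReduced w ∧ xcount w = 2 ∧
        FreeGroup.mk w ∈ MonoidHom.ker phi16} := by
    intro w hw
    simp only [Finset.coe_image, Set.mem_image, Finset.mem_coe, Finset.mem_range] at hw
    obtain ⟨n, hn, rfl⟩ := hw
    refine ⟨?_, cyc_W n, W_x n, ?_⟩
    · rw [W_len]; omega
    · rw [mk_W]; exact ker_eqn _
  have hcard : ((Finset.range (M / 8)).image W).card = M / 8 := by
    rw [Finset.card_image_of_injective _ hinj, Finset.card_range]
  have := Set.ncard_le_ncard hsub hfin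
  rw [Set.ncard_coe_finset, hcard] at this
  exact this

end Aux16

open Aux16

/-- For `F₂ = ⟨a,b⟩`, `H = ⟨b, ababa⟩` and `g = a`: each commutator `[(h₂h₁)^i, x h₁]`
(`i ≠ 0`) lies in the ideal `I_g` and has degree `2`; they are pairwise non-conjugate in
`H * ⟨x⟩`; consequently `ρ_{g,2}(M)` grows at least linearly in `M`. -/
theorem stmt16 :
    (∀ i : ℤ, i ≠ 0 → eqn16 i ∈ MonoidHom.ker phi16 ∧ xdeg (eqn16 i) = 2) ∧
    (∀ i j : ℤ, i ≠ 0 → j ≠ 0 → i ≠ j → ¬ IsConj (eqn16 i) (eqn16 j)) ∧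
    (∃ c : ℝ, 0 < c ∧ ∃ M₀ : ℕ, ∀ M : ℕ, M₀ ≤ M →
      c * (M : ℝ) ≤ (rhoD phi16 2 M : ℝ)) := by
  refine ⟨fun i hi => ⟨ker_eqn i, xdeg_eqn i hi⟩, ?_, ?_⟩
  · intro i j hi hj hij h
    have h2 := θ.map_isConj h
    rw [theta_eqn, theta_eqn] at h2
    obtain ⟨c, hc⟩ := isConj_iff.mp h2
    rw [central] at hc
    exact hij (by simpa using congrArg Heis.c hc)
  · refine ⟨1 / 16, by norm_num, 8, fun M hM => ?_⟩
    have h1 := rho_ge M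
    have h2 : M ≤ 16 * (M / 8) := by omega
    have h3 : (M : ℝ) ≤ 16 * ((M / 8 : ℕ) : ℝ) := by exact_mod_cast h2
    have h4 : ((M / 8 : ℕ) : ℝ) ≤ (rhoD phi16 2 M : ℝ) := by exact_mod_cast h1
    linarith
end

section
/- With the notation of the previous statement, the word â_i over {h_1^{±1},...,h_n^{±1},x^{±1}} satisfies: (a) â_i contains only the letters h_1,...,h_i and x; (b) in any two consecutive letters of â_i at least one is x; and (c) the length of â_i equals (p²+3p+4)/2 · (p^{i-1}−1)/(p−1) + p^{i-1}. -/
/-- The word `u(y,x) = x y x² y x³ ⋯ y x^{p+1}`, where `y` is substituted by the word `y`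
and `x` by the single letter `xl`. -/
def uWord {A : Type*} (p : ℕ) (xl : A) (y : List A) : List A :=
  (List.ofFn fun i : Fin p => List.replicate (i.1 + 1) xl ++ y).flatten ++
    List.replicate (p + 1) xl

section
variable {A : Type*}

lemma chain_rep_none (k : ℕ) :
    List.Chain' (fun a b => a = none ∨ b = none) (List.replicate k (none : Option A)) := by
  induction k with
  | zero => simp [List.Chain']
  | succ k ih =>
    cases k with
    | zero => simp [List.Chain']
    | succ m =>
      rw [List.replicate_succ]
      exact List.IsChain.cons_cons (Or.inl rfl) ih

lemma chainAux (t : List (Option A)) (ht : List.Chain' (fun a b => a = none ∨ b = none) t)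
    (hth : t.head? = some none) :
    ∀ L : List (List (Option A)),
      (∀ b ∈ L, b.head? = some none ∧ List.Chain' (fun a b => a = none ∨ b = none) b) →
      (L.flatten ++ t).head? = some none ∧
        List.Chain' (fun a b => a = none ∨ b = none) (L.flatten ++ t) := by
  intro L
  induction L with
  | nil => intro _; simpa using ⟨hth, ht⟩
  | cons b L ih =>
    intro hb
    obtain ⟨hbh, hbc⟩ := hb b (by simp)
    have hrest := ih (fun b' hb' => hb b' (by simp [hb']))
    rw [List.flatten_cons, List.append_assoc]
    constructor
    · cases b with
      | nil => simp at hbh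
      | cons a b' => simp at hbh; simp [hbh]
    · rw [List.Chain', List.isChain_append]
      refine ⟨hbc, hrest.2, ?_⟩
      intro x hx z hz
      rw [hrest.1] at hz
      simp at hz
      exact Or.inr hz.symm

lemma uWord_head_chain (p : ℕ) (y : List (Option A))
    (hy : List.Chain' (fun a b => a = none ∨ b = none) y) :
    (uWord p none y).head? = some none ∧
      List.Chain' (fun a b => a = none ∨ b = none) (uWord p none y) := by
  refine chainAux _ (chain_rep_none (p+1)) (by simp [List.replicate_succ]) _ ?_
  intro b hb
  simp only [List.mem_ofFn] at hb
  obtain ⟨i, rfl⟩ := hb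
  constructor
  · simp [List.replicate_succ]
  · rw [List.Chain', List.isChain_append]
    refine ⟨chain_rep_none _, hy, ?_⟩
    intro x hx z hz
    have : x = none := by
      have := List.mem_of_mem_getLast? hx
      simpa using (List.eq_of_mem_replicate this)
    exact Or.inl this

lemma uWord_mem (p : ℕ) (y : List (Option A)) {l : Option A} (hl : l ∈ uWord p none y) :
    l = none ∨ l ∈ y := by
  simp only [uWord, List.mem_append, List.mem_flatten, List.mem_ofFn] at hl
  rcases hl with ⟨b, ⟨i, rfl⟩, hb⟩ | hl
  · rcases List.mem_append.1 hb with h | h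
    · exact Or.inl (List.eq_of_mem_replicate h)
    · exact Or.inr h
  · exact Or.inl (List.eq_of_mem_replicate hl)

lemma uWord_len (p : ℕ) (hp : 1 ≤ p) (y : List (Option A)) :
    2 * (uWord p none y).length = p * (p + 1) + 2 * p * y.length + 2 * (p + 1) := by
  obtain ⟨q, rfl⟩ : ∃ q, p = q + 1 := ⟨p - 1, by omega⟩
  have h1 : (List.map List.length
      (List.ofFn fun i : Fin (q+1) => List.replicate (i.1+1) (none : Option A) ++ y)).sum
      = (∑ i ∈ Finset.range (q+1), i) + (q+1) + (q+1) * y.length := by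
    rw [List.map_ofFn, List.sum_ofFn]
    simp only [Function.comp_def, List.length_append, List.length_replicate]
    rw [Finset.sum_add_distrib, Finset.sum_add_distrib]
    simp [mul_comm]
    exact Fin.sum_univ_eq_sum_range (fun i => i) (q+1)
  simp only [uWord, List.length_append, List.length_flatten, List.length_replicate, h1]
  have hS : (∑ i ∈ Finset.range (q+1), i) * 2 = (q+1)*q := by
    rw [Finset.sum_range_id_mul_two]; simp
  nlinarith [hS]

end

/-- Fix `p ≥ 2` and `n ≥ 2`.  Words over the alphabet `{h₁,…,hₙ,x}` are modelled as lists
over `Option (Fin n)`, with `some j = h_{j+1}` and `none = x`.  Let `â₁ = h₁` and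
`â_{i+1} = h_{i+1} · u(âᵢ, x)`.  Then: (a) `âᵢ` contains only the letters `h₁,…,hᵢ` and
`x`; (b) of any two consecutive letters of `âᵢ` at least one is `x`; (c) the length of
`âᵢ` is `(p²+3p+4)/2 · (p^{i-1}−1)/(p−1) + p^{i-1}` (stated multiplied through by
`2(p−1)` to avoid division). -/
theorem stmt19 (p n : ℕ) (hp : 2 ≤ p) (hn : 2 ≤ n)
    (aw : Fin n → List (Option (Fin n)))
    (haw0 : aw ⟨0, by omega⟩ = [some ⟨0, by omega⟩])
    (hawS : ∀ i : ℕ, ∀ hi : i + 1 < n,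
      aw ⟨i + 1, hi⟩ = some ⟨i + 1, hi⟩ :: uWord p none (aw ⟨i, Nat.lt_of_succ_lt hi⟩)) :
    ∀ i : Fin n,
      (∀ l ∈ aw i, l = none ∨ ∃ j : Fin n, j.1 ≤ i.1 ∧ l = some j) ∧
      List.Chain' (fun a b => a = none ∨ b = none) (aw i) ∧
      2 * (p - 1) * (aw i).length =
        (p ^ 2 + 3 * p + 4) * (p ^ i.1 - 1) + 2 * (p - 1) * p ^ i.1 := by
  suffices H : ∀ i : ℕ, ∀ hi : i < n,
      (∀ l ∈ aw ⟨i, hi⟩, l = none ∨ ∃ j : Fin n, j.1 ≤ i ∧ l = some j) ∧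
      List.Chain' (fun a b => a = none ∨ b = none) (aw ⟨i, hi⟩) ∧
      2 * (p - 1) * (aw ⟨i, hi⟩).length =
        (p ^ 2 + 3 * p + 4) * (p ^ i - 1) + 2 * (p - 1) * p ^ i by
    intro i
    obtain ⟨i, hi⟩ := i
    exact H i hi
  intro i
  induction i with
  | zero =>
    intro hi
    rw [show aw ⟨0, hi⟩ = [some ⟨0, hi⟩] from haw0]
    refine ⟨?_, by simp [List.Chain'], by simp⟩
    rintro l hl
    simp only [List.mem_singleton] at hl
    subst hl
    exact Or.inr ⟨_, le_refl 0, rfl⟩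
  | succ i IH =>
    intro hi
    have hi' := Nat.lt_of_succ_lt hi
    obtain ⟨Hmem, Hch, Hlen⟩ := IH hi'
    rw [hawS i hi]
    obtain ⟨hhead, hchain⟩ := uWord_head_chain p _ Hch
    refine ⟨?_, ?_, ?_⟩
    · rintro l hl
      rcases List.mem_cons.1 hl with rfl | hl
      · exact Or.inr ⟨_, le_refl _, rfl⟩
      · rcases uWord_mem p _ hl with rfl | hl
        · exact Or.inl rfl
        · rcases Hmem l hl with rfl | ⟨j, hj, rfl⟩
          · exact Or.inl rfl
          · exact Or.inr ⟨j, by omega, rfl⟩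
    · rw [List.Chain', List.isChain_cons]
      refine ⟨?_, hchain⟩
      intro z hz
      rw [hhead] at hz
      simp only [Option.mem_some_iff] at hz
      exact Or.inr hz.symm
    · simp only [List.length_cons]
      have hu := uWord_len p (by omega) (aw ⟨i, hi'⟩)
      have hq1 : 1 ≤ p ^ i := Nat.one_le_pow _ _ (by omega)
      have hqp : 1 ≤ p ^ (i + 1) := Nat.one_le_pow _ _ (by omega)
      zify [show 1 ≤ p from by omega, hq1, hqp] at hu Hlen ⊢
      linear_combination (p - 1 : ℤ) * hu + (p : ℤ) * Hlen
end
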